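/- For every pair of integers k and j, the operation (x, y) ↦ x ▷ᵏ Fʲ(y), where F(y) = y ▷ y, makes the underlying set of any rack into a rack (it is left self-distributive and its left multiplications are bijections), and every rack homomorphism remains a homomorphism for this new operation. -/

import Mathlib

set_option linter.unusedSectionVars false

open Quandles

namespace RackPowAux

open Rack

variable {R S : Type*} [Rack R] [Rack S]

lemma zpow_succ_apply (e : Equiv.Perm R) (j : ℤ) (y : R) :
    (e ^ (j + 1)) y = e ((e ^ j) y) := by
  rw [add_comm, zpow_add, zpow_one, Equiv.Perm.mul_apply]

lemma zpow_pred_apply (e : Equiv.Perm R) (j : ℤ) (y : R) :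
    (e ^ (j - 1)) y = e⁻¹ ((e ^ j) y) := by
  rw [sub_eq_add_neg, add_comm, zpow_add, zpow_neg_one, Equiv.Perm.mul_apply]

lemma act'_selfApply (y : R) : act' ((selfApplyEquiv R) y) = act' y := by
  ext z
  exact self_act_act_eq

lemma act'_selfApply_symm (y : R) : act' ((selfApplyEquiv R)⁻¹ y) = act' y := by
  have := act'_selfApply ((selfApplyEquiv R)⁻¹ y)
  rw [Equiv.Perm.eq_inv_iff_eq.mp rfl] at this
  exact this.symm

lemma act'_F_zpow (j : ℤ) (y : R) : act' ((selfApplyEquiv R ^ j) y) = act' y := by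
  induction j using Int.induction_on with
  | zero => simp
  | succ n ih => rw [zpow_succ_apply, act'_selfApply, ih]
  | pred n ih =>
      rw [show (-(n : ℤ) - 1) = (-(n:ℤ)) - 1 from rfl, zpow_pred_apply,
        act'_selfApply_symm, ih]

lemma act'_conj_inv (x z : R) : act' ((act' x)⁻¹ z) = (act' x)⁻¹ * act' z * act' x := by
  have h := ad_conj x ((act' x)⁻¹ z)
  rw [show x ◃ ((act' x)⁻¹ z) = act' x ((act' x)⁻¹ z) from rfl,
    Equiv.Perm.eq_inv_iff_eq.mp rfl] at h
  rw [h]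
  group

lemma act'_zpow_conj (k : ℤ) (x z : R) :
    act' ((act' x ^ k) z) = act' x ^ k * act' z * (act' x ^ k)⁻¹ := by
  induction k using Int.induction_on with
  | zero => simp
  | succ n ih =>
      rw [zpow_succ_apply]
      have h := ad_conj x ((act' x ^ (n:ℤ)) z)
      rw [show x ◃ ((act' x ^ (n:ℤ)) z) = act' x ((act' x ^ (n:ℤ)) z) from rfl] at h
      rw [h, ih]
      group
  | pred n ih =>
      rw [zpow_pred_apply, act'_conj_inv, ih]
      group

lemma commute_act'_F (x : R) : Commute (act' x) (selfApplyEquiv R) := by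
  ext z
  exact Rack.self_distrib

lemma map_act'_zpow (f : R →◃ S) (k : ℤ) (x y : R) :
    f ((act' x ^ k) y) = (act' (f x) ^ k) (f y) := by
  induction k using Int.induction_on with
  | zero => simp
  | succ n ih =>
      rw [zpow_succ_apply, zpow_succ_apply, ← ih]
      exact f.map_act'
  | pred n ih =>
      rw [zpow_pred_apply, zpow_pred_apply, ← ih]
      set w := (act' x)⁻¹ ((act' x ^ (-(n:ℤ))) y) with hw
      have : f ((act' x) w) = (act' (f x)) (f w) := f.map_act'
      rw [hw, Equiv.Perm.eq_inv_iff_eq.mp rfl] at this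
      rw [this, Equiv.Perm.inv_eq_iff_eq.mpr rfl]

lemma map_F_zpow (f : R →◃ S) (j : ℤ) (y : R) :
    f ((selfApplyEquiv R ^ j) y) = (selfApplyEquiv S ^ j) (f y) := by
  induction j using Int.induction_on with
  | zero => simp
  | succ n ih =>
      rw [zpow_succ_apply, zpow_succ_apply, ← ih]
      exact f.map_act'
  | pred n ih =>
      rw [zpow_pred_apply, zpow_pred_apply, ← ih]
      set w := (selfApplyEquiv R)⁻¹ ((selfApplyEquiv R ^ (-(n:ℤ))) y) with hw
      have : f ((selfApplyEquiv R) w) = (selfApplyEquiv S) (f w) := f.map_act'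
      rw [hw, Equiv.Perm.eq_inv_iff_eq.mp rfl] at this
      rw [this, Equiv.Perm.inv_eq_iff_eq.mpr rfl]

lemma key_group_identity {G : Type*} [Group G] (a b c : G)
    (h1 : Commute a c) (h2 : Commute b c) :
    a * (c * (b * c)) = a * b * a⁻¹ * (c * (a * c)) := by
  have ha : c * (a * c) = a * (c * c) := by rw [← mul_assoc, ← h1.eq, mul_assoc]
  have hb : c * (b * c) = b * (c * c) := by rw [← mul_assoc, ← h2.eq, mul_assoc]
  rw [ha, hb]
  group

end RackPowAux

/-- The operation `(x, y) ↦ x ◃ᵏ Fʲ(y)` on a rack, where `F y = y ◃ y`. -/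
def rackPowOp (R : Type*) [Rack R] (k j : ℤ) (x y : R) : R :=
  (Rack.act' x ^ k) ((Rack.selfApplyEquiv R ^ j) y)

/-- For all integers `k, j`, the operation `(x, y) ↦ x ◃ᵏ Fʲ(y)` makes any rack
into a rack (left self-distributive with bijective left multiplications), and
every rack homomorphism remains a homomorphism for this operation. -/
theorem rackPowOp_is_rack_and_functorial (R S : Type*) [Rack R] [Rack S]
    (k j : ℤ) :
    (∀ x y z : R, rackPowOp R k j x (rackPowOp R k j y z) =
        rackPowOp R k j (rackPowOp R k j x y) (rackPowOp R k j x z)) ∧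
      (∀ x : R, Function.Bijective (rackPowOp R k j x)) ∧
      ∀ (f : R →◃ S) (x y : R),
        f (rackPowOp R k j x y) = rackPowOp S k j (f x) (f y) := by
  open Rack RackPowAux in
  refine ⟨?_, ?_, ?_⟩
  · intro x y z
    have hC : act' (rackPowOp R k j x y) = act' x ^ k * act' y * (act' x ^ k)⁻¹ := by
      rw [rackPowOp, act'_zpow_conj, act'_F_zpow]
    have hcomm : ∀ w : R, Commute (act' w ^ k) (selfApplyEquiv R ^ j) :=
      fun w => (commute_act'_F w).zpow_zpow k j
    show (act' x ^ k) ((selfApplyEquiv R ^ j)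
        ((act' y ^ k) ((selfApplyEquiv R ^ j) z))) = _
    rw [show rackPowOp R k j (rackPowOp R k j x y) (rackPowOp R k j x z) =
        (act' (rackPowOp R k j x y) ^ k) ((selfApplyEquiv R ^ j)
          ((act' x ^ k) ((selfApplyEquiv R ^ j) z))) from rfl]
    rw [hC]
    simp only [← Equiv.Perm.mul_apply]
    congr 1
    rw [conj_zpow]
    exact key_group_identity _ _ _ (hcomm x) (hcomm y)
  · intro x
    exact ((Rack.selfApplyEquiv R ^ j).trans (Rack.act' x ^ k)).bijective
  · intro f x y
    rw [rackPowOp, rackPowOp, map_act'_zpow, map_F_zpow]
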